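/- Every tree language recognized by a deterministic safety tree automaton with directions I and labels O is an I/O-safety property. -/

import Mathlib

variable {I O : Type}

/-- Path word of a full `O`-labeled `I`-tree along an infinite input sequence. -/
def PathWord (τ : List I → O) (t : ℕ → I) : ℕ → O × I :=
  fun n => (τ ((List.range n).map t), t n)

/-- The spreading of a word property: trees all of whose path words are in `ψ`. -/
def Spread (ψ : Set (ℕ → O × I)) : Set (List I → O) :=
  {τ | ∀ t : ℕ → I, PathWord τ t ∈ ψ}

/-- Linear-time safety for word properties. -/
def LinearSafety {A : Type} (ψ : Set (ℕ → A)) : Prop :=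
  ∀ w ∉ ψ, ∃ k : ℕ, ∀ w' : ℕ → A, (∀ i ≤ k, w' i = w i) → w' ∉ ψ

/-- `t` is a violation starting node of `τ` w.r.t. tree property `P`:
every full tree agreeing with `τ` on all proper prefixes of `t` is not in `P`. -/
def ViolationNode (P : Set (List I → O)) (τ : List I → O) (t : List I) : Prop :=
  ∀ τ' : List I → O, (∀ s : List I, s <+: t → s ≠ t → τ' s = τ s) → τ' ∉ P

/-- Reactive (I/O) safety for tree properties. -/
def IOSafety (P : Set (List I → O)) : Prop :=
  ∀ τ ∉ P, ∃ t : List I, ViolationNode P τ t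

/-- Universal (branching-time) safety for tree properties. -/
def UnivSafety (P : Set (List I → O)) : Prop :=
  ∀ τ ∉ P, ∃ T' : Finset (List I),
    (∀ s ∈ T', ∀ u : List I, u <+: s → u ∈ T') ∧
    ∀ τ' : List I → O, (∀ s ∈ T', τ' s = τ s) → τ' ∉ P

/-- A deterministic safety tree automaton with directions `I` and labels `O`. -/
structure DSTA (I O : Type) where
  Q : Type
  [fin : Fintype Q]
  δ : Q → O → Option (I → Q)
  q0 : Q

/-- Acceptance of a full `O`-labeled `I`-tree. -/
def DSTA.Accepts {I O : Type} (M : DSTA I O) (τ : List I → O) : Prop :=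
  ∃ ρ : List I → M.Q, ρ [] = M.q0 ∧
    ∀ t : List I, ∃ f : I → M.Q,
      M.δ (ρ t) (τ t) = some f ∧ ∀ x : I, ρ (t ++ [x]) = f x

/-- The canonical run value: starting from `q` at node `pre`, follow directions `rest`. -/
def goRun (M : DSTA I O) (τ : List I → O) : List I → List I → M.Q → Option M.Q
  | _, [], q => some q
  | pre, x :: xs, q =>
    match M.δ q (τ pre) with
    | none => none
    | some f => goRun M τ (pre ++ [x]) xs (f x)

def theRun (M : DSTA I O) (τ : List I → O) (t : List I) : Option M.Q :=
  goRun M τ [] t M.q0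

lemma goRun_append (M : DSTA I O) (τ : List I → O) (x : I) :
    ∀ (rest pre : List I) (q : M.Q),
      goRun M τ pre (rest ++ [x]) q =
        (goRun M τ pre rest q).bind fun q' => (M.δ q' (τ (pre ++ rest))).map (fun f => f x) := by
  intro rest
  induction rest with
  | nil =>
    intro pre q
    simp only [List.nil_append, List.append_nil, goRun]
    cases hd : M.δ q (τ pre) <;> simp [hd]
  | cons y ys ih =>
    intro pre q
    show goRun M τ pre (y :: (ys ++ [x])) q = _
    simp only [goRun]
    cases hd : M.δ q (τ pre) with
    | none => simp
    | some f =>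
      simp only []
      rw [ih (pre ++ [y]) (f y), List.append_assoc]
      rfl

lemma goRun_congr (M : DSTA I O) (τ τ' : List I → O) :
    ∀ (rest pre : List I) (q : M.Q),
      (∀ s, pre <+: s → s <+: pre ++ rest → s ≠ pre ++ rest → τ' s = τ s) →
      goRun M τ' pre rest q = goRun M τ pre rest q := by
  intro rest
  induction rest with
  | nil => intro pre q _; rfl
  | cons y ys ih =>
    intro pre q h
    have hpre : τ' pre = τ pre := by
      apply h pre (List.prefix_refl pre) (List.prefix_append pre (y :: ys))
      intro heq
      have := congrArg List.length heq
      simp at this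
    simp only [goRun, hpre]
    cases M.δ q (τ pre) with
    | none => rfl
    | some f =>
      apply ih (pre ++ [y]) (f y)
      intro s hs1 hs2 hs3
      apply h s ((List.prefix_append pre [y]).trans hs1)
      · simpa using hs2
      · simpa using hs3

lemma run_of_accepts (M : DSTA I O) (τ : List I → O) (ρ : List I → M.Q)
    (h0 : ρ [] = M.q0)
    (hstep : ∀ t : List I, ∃ f : I → M.Q,
      M.δ (ρ t) (τ t) = some f ∧ ∀ x : I, ρ (t ++ [x]) = f x) :
    ∀ u : List I, theRun M τ u = some (ρ u) := by
  intro u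
  induction u using List.reverseRecOn with
  | nil => simp [theRun, goRun, h0]
  | append_singleton u x ih =>
    obtain ⟨f, hf, hfx⟩ := hstep u
    simp only [theRun] at ih ⊢
    rw [goRun_append, ih]
    simp [hf, hfx]

lemma run_total (M : DSTA I O) (τ : List I → O)
    (h : ∀ u q, theRun M τ u = some q → ∃ f, M.δ q (τ u) = some f) :
    ∀ u, ∃ q, theRun M τ u = some q := by
  intro u
  induction u using List.reverseRecOn with
  | nil => exact ⟨M.q0, rfl⟩
  | append_singleton u x ih =>
    obtain ⟨q, hq⟩ := ih
    obtain ⟨f, hf⟩ := h u q hq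
    refine ⟨f x, ?_⟩
    simp only [theRun] at hq ⊢
    rw [goRun_append, hq]
    simp [hf]

lemma accepts_of_never_stuck (M : DSTA I O) (τ : List I → O)
    (h : ∀ u q, theRun M τ u = some q → ∃ f, M.δ q (τ u) = some f) :
    M.Accepts τ := by
  have htot := run_total M τ h
  refine ⟨fun u => (theRun M τ u).getD M.q0, ?_, ?_⟩
  · simp [theRun, goRun]
  · intro t
    obtain ⟨q, hq⟩ := htot t
    obtain ⟨f, hf⟩ := h t q hq
    refine ⟨f, ?_, ?_⟩
    · dsimp only; rw [hq]; simpa using hf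
    · intro x
      dsimp only
      obtain ⟨q', hq'⟩ := htot (t ++ [x])
      have : theRun M τ (t ++ [x]) = some (f x) := by
        simp only [theRun] at hq ⊢
        rw [goRun_append, hq]
        simp [hf]
      rw [this]; rfl

theorem safety_tree_automaton_language_is_reactive_safety
    [Fintype I] [Fintype O] [Nonempty I] [Nonempty O]
    (M : DSTA I O) :
    IOSafety {τ : List I → O | M.Accepts τ} := by
  intro τ hτ
  have hstuck : ∃ u q, theRun M τ u = some q ∧ M.δ q (τ u) = none := by
    by_contra h
    push_neg at h
    apply hτ
    apply accepts_of_never_stuck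
    intro u q hq
    cases hd : M.δ q (τ u) with
    | none => exact absurd hd (h u q hq)
    | some f => exact ⟨f, rfl⟩
  obtain ⟨u, q, hq, hδ⟩ := hstuck
  obtain ⟨x₀⟩ := ‹Nonempty I›
  refine ⟨u ++ [x₀], ?_⟩
  intro τ' hagree hτ'
  -- every proper prefix of u ++ [x₀] is a prefix of u
  have hpref : ∀ s : List I, s <+: u → τ' s = τ s := by
    intro s hs
    apply hagree s (hs.trans (List.prefix_append u [x₀]))
    intro heq
    have h1 : s.length ≤ u.length := hs.length_le
    have := congrArg List.length heq
    simp at this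
    omega
  have hτu : τ' u = τ u := hpref u (List.prefix_refl u)
  have hrun : theRun M τ' u = some q := by
    rw [theRun, goRun_congr M τ τ' u [] M.q0 ?_]
    · exact hq
    · intro s _ hs2 hs3
      exact hpref s (by simpa using hs2)
  obtain ⟨ρ, h0, hstep⟩ := hτ'
  have := run_of_accepts M τ' ρ h0 hstep u
  rw [hrun] at this
  obtain ⟨f, hf, _⟩ := hstep u
  rw [show ρ u = q from (Option.some_injective _ this).symm, hτu, hδ] at hf
  exact Option.some_ne_none f hf.symm
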